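/- Let D be a division ring and M = (m_1,…,m_r), N = (n_1,…,n_s) partitions of m and n. For every right submodule J of the nest module T_{(M,N)}(D) there exists a unique sequence (C_1,…,C_s) of right column reduced echelon matrices in M_m(D) such that: RCS(C_j) ⊆ RCS(C_{j+1}) for all 1 ≤ j < s; for each j, the i-th block row of C_j (rows partitioned according to M) is zero for all i > j; and J = {A ∈ M_{m×n}(D) : Col_j(A) ∈ C_j·M_{m×n_j}(D) for every 1 ≤ j ≤ s}, where C_j·M_{m×n_j}(D) := {C_j·Y : Y ∈ M_{m×n_j}(D)}. -/

import Mathlib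

open Matrix Pointwise

/-- The left row space of a matrix: the span of its rows in the left `D`-module of
row vectors `Fin n → D`. -/
def LRS {D : Type*} [DivisionRing D] {ι : Type*} {n : ℕ} (A : Matrix ι (Fin n) D) :
    Submodule D (Fin n → D) :=
  Submodule.span D (Set.range A)

/-- The right column space of a matrix: the span of its columns in the right `D`-module
(i.e. `Dᵐᵒᵖ`-module) of column vectors `Fin m → D`. -/
def RCS {D : Type*} [DivisionRing D] {ι : Type*} {m : ℕ} (A : Matrix (Fin m) ι D) :
    Submodule Dᵐᵒᵖ (Fin m → D) :=
  Submodule.span Dᵐᵒᵖ (Set.range Aᵀ)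

/-- `R` is a left row reduced echelon matrix: for some `t ≤ m`, the rows with (0-based)
index `≥ t` are zero, each of the first `t` rows has first nonzero entry `1`, located in
column `k i`, the `k i` are strictly increasing, and column `k i` is zero outside row `i`. -/
def IsRowReducedEchelon {D : Type*} [DivisionRing D] {m n : ℕ}
    (R : Matrix (Fin m) (Fin n) D) : Prop :=
  ∃ (t : ℕ) (ht : t ≤ m) (k : Fin t → Fin n),
    StrictMono k ∧
    (∀ i : Fin m, t ≤ (i : ℕ) → R i = 0) ∧
    (∀ i : Fin t, R (Fin.castLE ht i) (k i) = 1) ∧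
    (∀ (i : Fin t) (j : Fin n), (j : ℕ) < (k i : ℕ) → R (Fin.castLE ht i) j = 0) ∧
    (∀ (i : Fin t) (p : Fin m), (p : ℕ) ≠ (i : ℕ) → R p (k i) = 0)

/-- `C` is a right column reduced echelon matrix: its transpose is left row reduced
echelon (columns of `C` beyond the first `t` are zero, each of the first `t` columns has
first-from-the-top nonzero entry `1` located in row `k j`, the `k j` strictly increase,
and row `k j` is zero outside column `j`). -/
def IsColReducedEchelon {D : Type*} [DivisionRing D] {m n : ℕ}
    (C : Matrix (Fin m) (Fin n) D) : Prop :=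
  IsRowReducedEchelon Cᵀ

/-- `A` is upper triangular: the `(i,j)` entry vanishes whenever `i > j`. -/
def IsUpperTriangular {D : Type*} [Zero D] {m n : ℕ} (A : Matrix (Fin m) (Fin n) D) : Prop :=
  ∀ (i : Fin m) (j : Fin n), (j : ℕ) < (i : ℕ) → A i j = 0

/-- The index at which block `i` of the partition `M` starts. -/
def blockStart {r : ℕ} (M : Fin r → ℕ) (i : Fin r) : ℕ :=
  ∑ t ∈ Finset.Iio i, M t

theorem blockStart_add_lt {r : ℕ} (M : Fin r → ℕ) (i : Fin r) (a : Fin (M i)) :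
    blockStart M i + (a : ℕ) < ∑ t, M t := by
  have h2 : (a : ℕ) < M i := a.2
  have h1 : blockStart M i + M i ≤ ∑ t, M t := by
    have hins : i ∉ Finset.Iio i := by simp
    calc blockStart M i + M i = ∑ t ∈ insert i (Finset.Iio i), M t := by
          rw [Finset.sum_insert hins, blockStart, add_comm]
      _ ≤ ∑ t, M t := Finset.sum_le_sum_of_subset (Finset.subset_univ _)
  omega

/-- The global (row or column) index of the `a`-th entry of the `i`-th block of the
partition `M`. -/
def blockIdx {r : ℕ} (M : Fin r → ℕ) (i : Fin r) (a : Fin (M i)) : Fin (∑ t, M t) :=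
  ⟨blockStart M i + (a : ℕ), blockStart_add_lt M i a⟩

/-- Membership in the nest module `T_{(M,N)}(D)`: the `(i,j)` block vanishes whenever
`i > j`. -/
def IsNest {D : Type*} [Zero D] {r s : ℕ} (M : Fin r → ℕ) (N : Fin s → ℕ)
    (A : Matrix (Fin (∑ t, M t)) (Fin (∑ t, N t)) D) : Prop :=
  ∀ (i : Fin r) (j : Fin s) (a : Fin (M i)) (b : Fin (N j)),
    (j : ℕ) < (i : ℕ) → A (blockIdx M i a) (blockIdx N j b) = 0

/-- The `i`-th block row of a matrix whose rows are partitioned according to `M`. -/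
def blockRow {D : Type*} {r n : ℕ} (M : Fin r → ℕ)
    (A : Matrix (Fin (∑ t, M t)) (Fin n) D) (i : Fin r) :
    Matrix (Fin (M i)) (Fin n) D :=
  fun a q => A (blockIdx M i a) q

/-- The `j`-th block column of a matrix whose columns are partitioned according to `N`. -/
def blockCol {D : Type*} {s m : ℕ} (N : Fin s → ℕ)
    (A : Matrix (Fin m) (Fin (∑ t, N t)) D) (j : Fin s) :
    Matrix (Fin m) (Fin (N j)) D :=
  fun p b => A p (blockIdx N j b)

section AuxEchelon

variable {D : Type*} [DivisionRing D] {m : ℕ}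

/-- The set of pivot positions of a right submodule of column vectors. -/
noncomputable def pivotSet (W : Submodule Dᵐᵒᵖ (Fin m → D)) : Finset (Fin m) :=
  Set.Finite.toFinset (Set.toFinite
    {l | ∃ v ∈ W, v l ≠ 0 ∧ ∀ l' : Fin m, (l' : ℕ) < (l : ℕ) → v l' = 0})

lemma mem_pivotSet_iff {W : Submodule Dᵐᵒᵖ (Fin m → D)} {l : Fin m} :
    l ∈ pivotSet W ↔ ∃ v ∈ W, v l ≠ 0 ∧ ∀ l' : Fin m, (l' : ℕ) < (l : ℕ) → v l' = 0 := by
  simp [pivotSet]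

lemma eq_zero_of_vanish_pivots {W : Submodule Dᵐᵒᵖ (Fin m → D)} {v : Fin m → D}
    (hv : v ∈ W) (h : ∀ l ∈ pivotSet W, v l = 0) : v = 0 := by
  classical
  by_contra hne
  have hne' : ∃ l, v l ≠ 0 := by
    by_contra hc
    push_neg at hc
    exact hne (funext hc)
  set F : Finset (Fin m) := Finset.univ.filter (fun l => v l ≠ 0) with hF
  have hFne : F.Nonempty := by
    obtain ⟨l, hl⟩ := hne'
    exact ⟨l, by simp [hF, hl]⟩
  set l := F.min' hFne with hl
  have hlmem : v l ≠ 0 := by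
    have := F.min'_mem hFne
    simpa [hF] using this
  have hlmin : ∀ l' : Fin m, (l' : ℕ) < (l : ℕ) → v l' = 0 := by
    intro l' hl'
    by_contra hc
    have : l ≤ l' := F.min'_le l' (by simp [hF, hc])
    exact absurd hl' (by omega)
  exact hlmem (h l (mem_pivotSet_iff.2 ⟨v, hv, hlmem, hlmin⟩))

open MulOpposite in
lemma exists_pivot_elem (W : Submodule Dᵐᵒᵖ (Fin m → D)) :
    ∀ (d : ℕ) (i : Fin (pivotSet W).card), (pivotSet W).card - (i : ℕ) ≤ d →
    ∃ e, e ∈ W ∧ (∀ j : Fin (pivotSet W).card,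
        e ((pivotSet W).orderEmbOfFin rfl j) = if j = i then 1 else 0) ∧
      ∀ l : Fin m, (l : ℕ) < ((pivotSet W).orderEmbOfFin rfl i : ℕ) → e l = 0 := by
  classical
  set t := (pivotSet W).card
  set k := (pivotSet W).orderEmbOfFin rfl with hk
  intro d
  induction d with
  | zero => intro i hi; exact absurd hi (by have := i.2; omega)
  | succ d ih =>
    intro i hi
    have hkimem : k i ∈ pivotSet W := (pivotSet W).orderEmbOfFin_mem rfl i
    obtain ⟨v, hvW, hvne, hvlt⟩ := mem_pivotSet_iff.1 hkimem
    set u : Fin m → D := op (v (k i))⁻¹ • v with hu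
    have huW : u ∈ W := W.smul_mem _ hvW
    have huki : u (k i) = 1 := by
      simp [hu, MulOpposite.smul_eq_mul_unop, mul_inv_cancel₀ hvne]
    have hult : ∀ l : Fin m, (l : ℕ) < (k i : ℕ) → u l = 0 := by
      intro l hl
      simp [hu, MulOpposite.smul_eq_mul_unop, hvlt l hl]
    -- choose e_j for j > i
    have hih : ∀ j : Fin t, i < j → ∃ e, e ∈ W ∧
        (∀ j' : Fin t, e (k j') = if j' = j then 1 else 0) ∧
        ∀ l : Fin m, (l : ℕ) < (k j : ℕ) → e l = 0 := by
      intro j hj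
      refine ih j ?_
      have h1 : (i : ℕ) < (j : ℕ) := hj
      have h2 : t - (i : ℕ) ≤ d + 1 := hi
      have := j.2
      omega
    set g : Fin t → (Fin m → D) := fun j =>
      if h : i < j then Classical.choose (hih j h) else 0 with hg
    have hgW : ∀ j, g j ∈ W := by
      intro j
      by_cases h : i < j
      · simpa [hg, h] using (Classical.choose_spec (hih j h)).1
      · simp [hg, h]
    have hgd : ∀ j, i < j → ∀ j' : Fin t, g j (k j') = if j' = j then 1 else 0 := by
      intro j h j'
      simpa [hg, h] using (Classical.choose_spec (hih j h)).2.1 j'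
    have hglt : ∀ j, i < j → ∀ l : Fin m, (l : ℕ) < (k j : ℕ) → g j l = 0 := by
      intro j h l hl
      simpa [hg, h] using (Classical.choose_spec (hih j h)).2.2 l hl
    refine ⟨u - ∑ j ∈ Finset.Ioi i, op (u (k j)) • g j, ?_, ?_, ?_⟩
    · exact W.sub_mem huW (Submodule.sum_mem W (fun j _ => W.smul_mem _ (hgW j)))
    · intro j
      have hsum : (∑ j' ∈ Finset.Ioi i, op (u (k j')) • g j') (k j)
          = ∑ j' ∈ Finset.Ioi i, g j' (k j) * u (k j') := by
        rw [Finset.sum_apply]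
        exact Finset.sum_congr rfl fun j' _ => by
          simp [MulOpposite.smul_eq_mul_unop]
      rcases lt_trichotomy j i with hji | hji | hji
      · have h1 : u (k j) = 0 := hult _ (k.strictMono hji)
        have h2 : ∀ j' ∈ Finset.Ioi i, g j' (k j) * u (k j') = 0 := by
          intro j' hj'
          have hij' : i < j' := Finset.mem_Ioi.1 hj'
          have : g j' (k j) = 0 := by
            rw [hgd j' hij' j]
            simp [Fin.ne_of_lt (lt_trans hji hij')]
          simp [this]
        simp [Pi.sub_apply, hsum, Finset.sum_congr rfl h2, h1, Fin.ne_of_lt hji]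
      · subst hji
        have h2 : ∀ j' ∈ Finset.Ioi j, g j' (k j) * u (k j') = 0 := by
          intro j' hj'
          have hij' : j < j' := Finset.mem_Ioi.1 hj'
          have : g j' (k j) = 0 := hglt j' hij' _ (k.strictMono hij')
          simp [this]
        simp [Pi.sub_apply, hsum, Finset.sum_congr rfl h2, huki]
      · have hsum2 : ∑ j' ∈ Finset.Ioi i, g j' (k j) * u (k j') = u (k j) := by
          rw [Finset.sum_eq_single j]
          · rw [hgd j hji j]; simp
          · intro j' hj' hne
            rw [hgd j' (Finset.mem_Ioi.1 hj') j]
            simp [Ne.symm hne]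
          · intro h; exact absurd (Finset.mem_Ioi.2 hji) h
        simp [Pi.sub_apply, hsum, hsum2, Fin.ne_of_gt hji]
    · intro l hl
      have h1 : u l = 0 := hult l hl
      have h2 : (∑ j ∈ Finset.Ioi i, op (u (k j)) • g j) l = 0 := by
        rw [Finset.sum_apply]
        refine Finset.sum_eq_zero fun j hj => ?_
        have hij : i < j := Finset.mem_Ioi.1 hj
        have : g j l = 0 := hglt j hij l (lt_trans hl (k.strictMono hij))
        simp [MulOpposite.smul_eq_mul_unop, this]
      simp [Pi.sub_apply, h1, h2]

open MulOpposite in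
theorem exists_rowEchelon (W : Submodule Dᵐᵒᵖ (Fin m → D)) :
    ∃ R : Matrix (Fin m) (Fin m) D, IsRowReducedEchelon R ∧
      Submodule.span Dᵐᵒᵖ (Set.range R) = W := by
  classical
  set t := (pivotSet W).card with htdef
  set k := (pivotSet W).orderEmbOfFin rfl with hk
  have ht : t ≤ m := by
    have := Finset.card_le_univ (pivotSet W)
    simpa using this
  set e : Fin t → (Fin m → D) := fun i =>
    Classical.choose (exists_pivot_elem W (t - i) i le_rfl) with he
  have heW : ∀ i, e i ∈ W := fun i =>
    (Classical.choose_spec (exists_pivot_elem W (t - i) i le_rfl)).1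
  have hed : ∀ i j : Fin t, e i (k j) = if j = i then 1 else 0 := fun i j =>
    (Classical.choose_spec (exists_pivot_elem W (t - i) i le_rfl)).2.1 j
  have helt : ∀ (i : Fin t) (l : Fin m), (l : ℕ) < (k i : ℕ) → e i l = 0 := fun i =>
    (Classical.choose_spec (exists_pivot_elem W (t - i) i le_rfl)).2.2
  set R : Matrix (Fin m) (Fin m) D := fun p q =>
    if h : (p : ℕ) < t then e ⟨p, h⟩ q else 0 with hR
  have hrow2 : ∀ (p : Fin m) (h : (p : ℕ) < t), R p = e ⟨p, h⟩ := by
    intro p h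
    funext q
    simp only [hR]
    rw [dif_pos h]
  have hrow : ∀ i : Fin t, R (Fin.castLE ht i) = e i := by
    intro i
    have h : ((Fin.castLE ht i : Fin m) : ℕ) < t := by simp
    rw [hrow2 _ h]
  refine ⟨R, ⟨t, ht, k, k.strictMono, ?_, ?_, ?_, ?_⟩, ?_⟩
  · intro i hi
    funext q
    simp only [hR, Pi.zero_apply]
    rw [dif_neg (by omega)]
  · intro i; rw [hrow]; rw [hed i i]; simp
  · intro i j hj; rw [hrow]; exact helt i j hj
  · intro i p hp
    by_cases h : (p : ℕ) < t
    · rw [hrow2 p h, hed]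
      have hne : i ≠ (⟨(p : ℕ), h⟩ : Fin t) := by
        intro hc
        exact hp (by rw [hc])
      simp [hne]
    · simp only [hR]; rw [dif_neg h]
  · apply le_antisymm
    · rw [Submodule.span_le]
      rintro _ ⟨p, rfl⟩
      by_cases h : (p : ℕ) < t
      · rw [hrow2 p h]
        exact heW _
      · have : R p = 0 := by
          funext q; simp only [hR, Pi.zero_apply]; rw [dif_neg h]
        rw [this]; exact W.zero_mem
    · intro w hw
      have key : w = ∑ i : Fin t, op (w (k i)) • e i := by
        have hdiff : w - ∑ i : Fin t, op (w (k i)) • e i = 0 := by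
          apply eq_zero_of_vanish_pivots
            (W.sub_mem hw (Submodule.sum_mem W fun i _ => W.smul_mem _ (heW i)))
          intro l hl
          obtain ⟨j, hj⟩ : ∃ j : Fin t, k j = l := by
            have hrange := Finset.range_orderEmbOfFin (pivotSet W) (k := t) rfl
            have : l ∈ Set.range ⇑((pivotSet W).orderEmbOfFin rfl) := by
              rw [hrange]; exact hl
            exact this
          subst hj
          have : (∑ i : Fin t, op (w (k i)) • e i) (k j) = w (k j) := by
            rw [Finset.sum_apply]
            rw [Finset.sum_eq_single j]
            · simp [MulOpposite.smul_eq_mul_unop, hed j j]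
            · intro i _ hne
              simp [MulOpposite.smul_eq_mul_unop, hed i j, Ne.symm hne]
            · simp
          simp [Pi.sub_apply, this]
        have := sub_eq_zero.1 hdiff
        exact this
      rw [key]
      refine Submodule.sum_mem _ fun i _ => Submodule.smul_mem _ _ ?_
      rw [← hrow i]
      exact Submodule.subset_span ⟨_, rfl⟩

open MulOpposite in
lemma echelon_coords {R : Matrix (Fin m) (Fin m) D} {t : ℕ} {ht : t ≤ m} {k : Fin t → Fin m}
    (hzero : ∀ i : Fin m, t ≤ (i : ℕ) → R i = 0)
    (hpiv1 : ∀ i : Fin t, R (Fin.castLE ht i) (k i) = 1)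
    (hpivcol : ∀ (i : Fin t) (p : Fin m), (p : ℕ) ≠ (i : ℕ) → R p (k i) = 0)
    {v : Fin m → D} (hv : v ∈ Submodule.span Dᵐᵒᵖ (Set.range R)) :
    v = ∑ i : Fin t, op (v (k i)) • R (Fin.castLE ht i) := by
  classical
  obtain ⟨c, hc⟩ := (Submodule.mem_span_range_iff_exists_fun Dᵐᵒᵖ).1 hv
  have hsum : ∑ q : Fin m, c q • R q
      = ∑ i : Fin t, c (Fin.castLE ht i) • R (Fin.castLE ht i) := by
    calc ∑ q : Fin m, c q • R q
        = ∑ q ∈ Finset.univ.map (Fin.castLEEmb ht), c q • R q := by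
          symm
          apply Finset.sum_subset (Finset.subset_univ _)
          intro q _ hq
          have hqt : t ≤ (q : ℕ) := by
            by_contra hlt
            push_neg at hlt
            exact hq (Finset.mem_map.2 ⟨⟨(q : ℕ), hlt⟩, Finset.mem_univ _, by ext; simp⟩)
          rw [hzero q hqt, smul_zero]
      _ = ∑ i : Fin t, c (Fin.castLE ht i) • R (Fin.castLE ht i) :=
          Finset.sum_map Finset.univ (Fin.castLEEmb ht) (fun q => c q • R q)
  have hv2 : v = ∑ i : Fin t, c (Fin.castLE ht i) • R (Fin.castLE ht i) := by
    rw [← hsum, hc]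
  have hcoef : ∀ j : Fin t, c (Fin.castLE ht j) = op (v (k j)) := by
    intro j
    have : v (k j) = unop (c (Fin.castLE ht j)) := by
      rw [hv2, Finset.sum_apply]
      rw [Finset.sum_eq_single j]
      · simp [MulOpposite.smul_eq_mul_unop, hpiv1 j]
      · intro i _ hne
        have : R (Fin.castLE ht i) (k j) = 0 := by
          apply hpivcol j
          simp only [Fin.coe_castLE]
          exact fun hc' => hne (Fin.ext hc')
        simp [MulOpposite.smul_eq_mul_unop, this]
      · simp
    rw [this, op_unop]
  calc v = ∑ i : Fin t, c (Fin.castLE ht i) • R (Fin.castLE ht i) := hv2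
    _ = ∑ i : Fin t, op (v (k i)) • R (Fin.castLE ht i) :=
      Finset.sum_congr rfl fun i _ => by rw [hcoef i]

open MulOpposite in
lemma echelon_pivotSet {R : Matrix (Fin m) (Fin m) D} {t : ℕ} {ht : t ≤ m} {k : Fin t → Fin m}
    (hmono : StrictMono k)
    (hzero : ∀ i : Fin m, t ≤ (i : ℕ) → R i = 0)
    (hpiv1 : ∀ i : Fin t, R (Fin.castLE ht i) (k i) = 1)
    (hlt : ∀ (i : Fin t) (j : Fin m), (j : ℕ) < (k i : ℕ) → R (Fin.castLE ht i) j = 0)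
    (hpivcol : ∀ (i : Fin t) (p : Fin m), (p : ℕ) ≠ (i : ℕ) → R p (k i) = 0) :
    Finset.image k Finset.univ = pivotSet (Submodule.span Dᵐᵒᵖ (Set.range R)) := by
  classical
  apply Finset.ext
  intro l
  simp only [Finset.mem_image, Finset.mem_univ, true_and]
  constructor
  · rintro ⟨i, rfl⟩
    refine mem_pivotSet_iff.2 ⟨R (Fin.castLE ht i), Submodule.subset_span ⟨_, rfl⟩, ?_, ?_⟩
    · rw [hpiv1 i]; exact one_ne_zero
    · exact fun l' hl' => hlt i l' hl'
  · intro hl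
    obtain ⟨v, hv, hvne, hvlt⟩ := mem_pivotSet_iff.1 hl
    have hv2 := echelon_coords hzero hpiv1 hpivcol hv
    have hex : ∃ i : Fin t, v (k i) ≠ 0 := by
      by_contra hc
      push_neg at hc
      apply hvne
      rw [hv2, Finset.sum_apply]
      exact Finset.sum_eq_zero fun i _ => by simp [hc i]
    set F : Finset (Fin t) := Finset.univ.filter (fun i => v (k i) ≠ 0) with hF
    have hFne : F.Nonempty := by
      obtain ⟨i, hi⟩ := hex
      exact ⟨i, by simp [hF, hi]⟩
    set i0 := F.min' hFne with hi0
    have hi0ne : v (k i0) ≠ 0 := by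
      have := F.min'_mem hFne
      simpa [hF] using this
    -- v vanishes strictly before k i0
    have hvanish : ∀ l' : Fin m, (l' : ℕ) < (k i0 : ℕ) → v l' = 0 := by
      intro l' hl'
      rw [hv2, Finset.sum_apply]
      refine Finset.sum_eq_zero fun i _ => ?_
      by_cases hvi : v (k i) = 0
      · simp [hvi]
      · have hii0 : i0 ≤ i := F.min'_le i (by simp [hF, hvi])
        have : (l' : ℕ) < (k i : ℕ) := by
          have := hmono.monotone hii0
          have h2 : (k i0 : ℕ) ≤ (k i : ℕ) := this
          omega
        simp [MulOpposite.smul_eq_mul_unop, hlt i l' this]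
    -- hence l = k i0
    refine ⟨i0, ?_⟩
    rcases lt_trichotomy ((k i0 : Fin m) : ℕ) ((l : Fin m) : ℕ) with h | h | h
    · exact absurd (hvlt _ h) hi0ne
    · exact Fin.ext h
    · exact absurd (hvanish _ h) hvne

open MulOpposite in
theorem rowEchelon_unique {R R' : Matrix (Fin m) (Fin m) D}
    (hR : IsRowReducedEchelon R) (hR' : IsRowReducedEchelon R')
    (hspan : Submodule.span Dᵐᵒᵖ (Set.range R) = Submodule.span Dᵐᵒᵖ (Set.range R')) :
    R = R' := by
  classical
  obtain ⟨t, ht, k, hmono, hzero, hpiv1, hlt, hpivcol⟩ := hR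
  obtain ⟨t', ht', k', hmono', hzero', hpiv1', hlt', hpivcol'⟩ := hR'
  have hpiv := echelon_pivotSet hmono hzero hpiv1 hlt hpivcol
  have hpiv' := echelon_pivotSet hmono' hzero' hpiv1' hlt' hpivcol'
  rw [← hspan] at hpiv'
  have himg : Finset.image k Finset.univ = Finset.image k' Finset.univ := by
    rw [hpiv, hpiv']
  have hteq : t = t' := by
    have h1 : (Finset.image k Finset.univ).card = t := by
      rw [Finset.card_image_of_injective _ hmono.injective, Finset.card_univ, Fintype.card_fin]
    have h2 : (Finset.image k' Finset.univ).card = t' := by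
      rw [Finset.card_image_of_injective _ hmono'.injective, Finset.card_univ, Fintype.card_fin]
    rw [← h1, ← h2, himg]
  subst hteq
  have hkk : k = k' := by
    have hc1 : (Finset.image k Finset.univ).card = t :=
      by rw [Finset.card_image_of_injective _ hmono.injective, Finset.card_univ, Fintype.card_fin]
    have e1 := Finset.orderEmbOfFin_unique hc1 (fun i => Finset.mem_image_of_mem k (Finset.mem_univ i)) hmono
    have e2 := Finset.orderEmbOfFin_unique hc1 (fun i => by rw [himg]; exact Finset.mem_image_of_mem k' (Finset.mem_univ i)) hmono'
    exact e1.trans e2.symm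
  subst hkk
  -- rows coincide
  funext p q
  by_cases hp : (p : ℕ) < t
  · have hpc : p = Fin.castLE ht ⟨(p : ℕ), hp⟩ := by ext; simp
    set i : Fin t := ⟨(p : ℕ), hp⟩ with hi
    have hmem : R p ∈ Submodule.span Dᵐᵒᵖ (Set.range R') := by
      rw [← hspan]; exact Submodule.subset_span ⟨p, rfl⟩
    have hco := echelon_coords hzero' hpiv1' hpivcol' hmem
    have hdelta : ∀ j : Fin t, R p (k j) = if j = i then 1 else 0 := by
      intro j
      by_cases hj : j = i
      · subst hj
        rw [hpc]
        have := hpiv1 i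
        simpa using this
      · rw [if_neg hj]
        exact hpivcol j p (fun hc' => hj (Fin.ext (by rw [← hc'])))
    have : R p = ∑ j : Fin t, op (R p (k j)) • R' (Fin.castLE ht' j) := hco
    rw [this]
    have : ∀ j : Fin t, op (R p (k j)) • R' (Fin.castLE ht' j)
        = if j = i then R' (Fin.castLE ht' j) else 0 := by
      intro j
      rw [hdelta j]
      by_cases hj : j = i <;> simp [hj]
    rw [Finset.sum_congr rfl (fun j _ => this j), Finset.sum_ite_eq' Finset.univ i
      (fun j => R' (Fin.castLE ht' j)), if_pos (Finset.mem_univ i)]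
    have : Fin.castLE ht' i = p := by ext; simp [hi]
    rw [this]
  · push_neg at hp
    rw [hzero p hp, hzero' p hp]

lemma blockStart_add_le {r : ℕ} (M : Fin r → ℕ) {i j : Fin r} (h : i < j) :
    blockStart M i + M i ≤ blockStart M j := by
  have hins : i ∉ Finset.Iio i := by simp
  have hsub : insert i (Finset.Iio i) ⊆ Finset.Iio j := by
    intro x hx
    simp only [Finset.mem_insert, Finset.mem_Iio] at hx ⊢
    rcases hx with rfl | hx
    · exact h
    · exact lt_trans hx h
  calc blockStart M i + M i = ∑ t ∈ insert i (Finset.Iio i), M t := by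
        rw [Finset.sum_insert hins, blockStart, add_comm]
    _ ≤ ∑ t ∈ Finset.Iio j, M t := Finset.sum_le_sum_of_subset hsub
    _ = blockStart M j := rfl

lemma blockIdx_inj {r : ℕ} (M : Fin r → ℕ) {i j : Fin r} {a : Fin (M i)} {b : Fin (M j)}
    (h : blockIdx M i a = blockIdx M j b) : i = j ∧ (a : ℕ) = (b : ℕ) := by
  have hval : blockStart M i + (a : ℕ) = blockStart M j + (b : ℕ) :=
    congrArg Fin.val h
  have hij : i = j := by
    by_contra hne
    rcases lt_or_gt_of_ne hne with hlt | hlt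
    · have := blockStart_add_le M hlt
      have := a.2
      have := b.2
      omega
    · have := blockStart_add_le M hlt
      have := a.2
      have := b.2
      omega
  subst hij
  exact ⟨rfl, by omega⟩

lemma blockStart_succ {r : ℕ} (M : Fin r → ℕ) (j : Fin r) (h : (j : ℕ) + 1 < r) :
    blockStart M ⟨(j : ℕ) + 1, h⟩ = blockStart M j + M j := by
  have hins : j ∉ Finset.Iio j := by simp
  have hset : Finset.Iio (⟨(j : ℕ) + 1, h⟩ : Fin r) = insert j (Finset.Iio j) := by
    ext x
    simp only [Finset.mem_Iio, Finset.mem_insert, Fin.lt_def, Fin.ext_iff]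
    omega
  rw [blockStart, hset, Finset.sum_insert hins, blockStart, add_comm]

lemma blockIdx_surj {r : ℕ} (M : Fin r → ℕ) (q : Fin (∑ t, M t)) :
    ∃ (i : Fin r) (a : Fin (M i)), q = blockIdx M i a := by
  classical
  have hq := q.2
  have hr : 0 < r := by
    rcases Nat.eq_zero_or_pos r with rfl | h
    · simp at hq
    · exact h
  set F : Finset (Fin r) := Finset.univ.filter (fun j => blockStart M j ≤ (q : ℕ)) with hF
  have hFne : F.Nonempty := by
    refine ⟨⟨0, hr⟩, ?_⟩
    simp only [hF, Finset.mem_filter, Finset.mem_univ, true_and]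
    rw [blockStart]
    have : Finset.Iio (⟨0, hr⟩ : Fin r) = ∅ := by
      apply Finset.eq_empty_of_forall_notMem
      intro x hx
      simp only [Finset.mem_Iio] at hx
      exact absurd hx (by simp [Fin.lt_def])
    rw [this, Finset.sum_empty]
    omega
  set j := F.max' hFne with hj
  have h1 : blockStart M j ≤ (q : ℕ) := by
    have := F.max'_mem hFne
    simpa [hF] using this
  have h2 : (q : ℕ) < blockStart M j + M j := by
    by_contra hc
    push_neg at hc
    by_cases htop : (j : ℕ) + 1 < r
    · set j' : Fin r := ⟨(j : ℕ) + 1, htop⟩ with hj'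
      have hlt : j < j' := by simp [hj', Fin.lt_def]
      have hle : blockStart M j' = blockStart M j + M j := blockStart_succ M j htop
      have : j' ∈ F := by
        simp only [hF, Finset.mem_filter, Finset.mem_univ, true_and]
        omega
      have := F.le_max' j' this
      exact absurd (lt_of_lt_of_le hlt this) (lt_irrefl _)
    · have huniv : Finset.Iio j ∪ {j} = Finset.univ := by
        apply Finset.eq_univ_of_forall
        intro x
        simp only [Finset.mem_union, Finset.mem_Iio, Finset.mem_singleton]
        have hx := x.2
        have hj2 := j.2
        rcases lt_trichotomy (x : ℕ) (j : ℕ) with h | h | h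
        · exact Or.inl h
        · exact Or.inr (Fin.ext h)
        · omega
      have hdisj : Disjoint (Finset.Iio j) {j} := by
        simp
      have : blockStart M j + M j = ∑ t, M t := by
        have hsing : M j = ∑ t ∈ ({j} : Finset (Fin r)), M t :=
          (Finset.sum_singleton _ _).symm
        rw [blockStart, hsing, ← Finset.sum_union hdisj, huniv]
      omega
  refine ⟨j, ⟨(q : ℕ) - blockStart M j, by omega⟩, ?_⟩
  ext
  simp [blockIdx]
  omega

open MulOpposite in
lemma exists_factor_iff {n : ℕ} (C : Matrix (Fin m) (Fin m) D)
    (B : Matrix (Fin m) (Fin n) D) :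
    (∃ Y : Matrix (Fin m) (Fin n) D, B = C * Y) ↔
      ∀ b : Fin n, (fun p => B p b) ∈ RCS C := by
  constructor
  · rintro ⟨Y, rfl⟩ b
    have : (fun p => (C * Y) p b) = ∑ q : Fin m, op (Y q b) • Cᵀ q := by
      funext p
      rw [Finset.sum_apply]
      rw [Matrix.mul_apply]
      exact Finset.sum_congr rfl fun q _ => by
        simp [MulOpposite.smul_eq_mul_unop, Matrix.transpose_apply]
    rw [this]
    exact Submodule.sum_mem _ fun q _ =>
      Submodule.smul_mem _ _ (Submodule.subset_span ⟨q, rfl⟩)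
  · intro h
    have hch : ∀ b : Fin n, ∃ c : Fin m → Dᵐᵒᵖ,
        ∑ q : Fin m, c q • Cᵀ q = fun p => B p b := by
      intro b
      exact (Submodule.mem_span_range_iff_exists_fun Dᵐᵒᵖ).1 (h b)
    choose c hc using hch
    refine ⟨fun q b => unop (c b q), ?_⟩
    funext p b
    have := congrFun (hc b) p
    rw [Finset.sum_apply] at this
    show B p b = ∑ q, C p q * unop (c b q)
    rw [← this]
    exact Finset.sum_congr rfl fun q _ => by
      simp [MulOpposite.smul_eq_mul_unop, Matrix.transpose_apply]

lemma isNest_stdBasisMatrix {s : ℕ} (N : Fin s → ℕ) (j j' : Fin s)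
    (b : Fin (N j)) (b' : Fin (N j')) (c : D) (h : j ≤ j') :
    IsNest N N (Matrix.single (blockIdx N j b) (blockIdx N j' b') c) := by
  intro i1 j1 a1 b1 hlt
  rw [Matrix.single]
  simp only [Matrix.of_apply]
  rw [if_neg]
  rintro ⟨h1, h2⟩
  obtain ⟨hji, -⟩ := blockIdx_inj N h1
  obtain ⟨hjj, -⟩ := blockIdx_inj N h2
  subst hji
  subst hjj
  exact absurd hlt (by omega)

lemma mul_stdBasisMatrix_apply {m n : ℕ} (A : Matrix (Fin m) (Fin n) D)
    (i j : Fin n) (c : D) (p : Fin m) (q : Fin n) :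
    (A * Matrix.single i j c) p q = if q = j then A p i * c else 0 := by
  rw [Matrix.mul_apply]
  simp only [Matrix.single, Matrix.of_apply, mul_ite, mul_zero]
  by_cases h : q = j
  · subst h
    simp only [and_true]
    rw [Finset.sum_ite_eq Finset.univ i (fun k => A p k * c), if_pos (Finset.mem_univ i)]
    simp
  · rw [if_neg h]
    refine Finset.sum_eq_zero fun k _ => ?_
    rw [if_neg]
    rintro ⟨-, h2⟩
    exact h h2.symm

open MulOpposite in
theorem main_thm
    (D : Type*) [DivisionRing D] (r s : ℕ) (M : Fin r → ℕ) (N : Fin s → ℕ)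
    (hM : ∀ i, 0 < M i) (hN : ∀ j, 0 < N j)
    (J : AddSubgroup (Matrix (Fin (∑ t, M t)) (Fin (∑ t, N t)) D))
    (hJT : ∀ A ∈ J, IsNest M N A)
    (hJ : ∀ (A : Matrix (Fin (∑ t, M t)) (Fin (∑ t, N t)) D)
      (Q : Matrix (Fin (∑ t, N t)) (Fin (∑ t, N t)) D),
      IsNest N N Q → A ∈ J → A * Q ∈ J) :
    ∃! C : Fin s → Matrix (Fin (∑ t, M t)) (Fin (∑ t, M t)) D,
      (∀ j, IsRowReducedEchelon (C j)ᵀ) ∧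
      (∀ (j : Fin s) (hj : (j : ℕ) + 1 < s), RCS (C j) ≤ RCS (C ⟨(j : ℕ) + 1, hj⟩)) ∧
      (∀ (j : Fin s) (i : Fin r), (j : ℕ) < (i : ℕ) →
        ∀ (a : Fin (M i)) (q : Fin (∑ t, M t)), C j (blockIdx M i a) q = 0) ∧
      (J : Set (Matrix (Fin (∑ t, M t)) (Fin (∑ t, N t)) D)) =
        {A | ∀ j : Fin s, ∃ Y : Matrix (Fin (∑ t, M t)) (Fin (N j)) D,
          blockCol N A j = C j * Y} := by
  -- the candidate column space at block column j
  set Wcar : Fin s → Set (Fin (∑ t, M t) → D) := fun j =>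
    {v | ∃ A ∈ J, v = fun p => A p (blockIdx N j ⟨0, hN j⟩)} with hWcar
  have colmem : ∀ A ∈ J, ∀ (j : Fin s) (b : Fin (N j)),
      (fun p => A p (blockIdx N j b)) ∈ Wcar j := by
    intro A hA j b
    refine ⟨A * Matrix.single (blockIdx N j b) (blockIdx N j ⟨0, hN j⟩) 1,
      hJ _ _ (isNest_stdBasisMatrix N j j b _ 1 le_rfl) hA, ?_⟩
    funext p
    rw [mul_stdBasisMatrix_apply, if_pos rfl, mul_one]
  have single : ∀ (j : Fin s) (b : Fin (N j)) (v : Fin (∑ t, M t) → D), v ∈ Wcar j →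
      (fun p q => if q = blockIdx N j b then v p else 0) ∈ J := by
    rintro j b v ⟨A, hA, hv⟩
    have heq : (fun p q => if q = blockIdx N j b then v p else 0)
        = A * Matrix.single (blockIdx N j ⟨0, hN j⟩) (blockIdx N j b) (1 : D) := by
      funext p q
      by_cases hq : q = blockIdx N j b
      · subst hq
        rw [if_pos rfl, mul_stdBasisMatrix_apply, if_pos rfl, mul_one, hv]
      · rw [if_neg hq, mul_stdBasisMatrix_apply, if_neg hq]
    rw [heq]
    exact hJ _ _ (isNest_stdBasisMatrix N j j _ b 1 le_rfl) hA
  have mono : ∀ (j j' : Fin s), j ≤ j' → Wcar j ⊆ Wcar j' := by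
    rintro j j' hjj' v ⟨A, hA, hv⟩
    refine ⟨A * Matrix.single (blockIdx N j ⟨0, hN j⟩) (blockIdx N j' ⟨0, hN j'⟩) 1,
      hJ _ _ (isNest_stdBasisMatrix N j j' _ _ 1 hjj') hA, ?_⟩
    funext p
    rw [mul_stdBasisMatrix_apply, if_pos rfl, mul_one, hv]
  have vanish : ∀ (j : Fin s) (v : Fin (∑ t, M t) → D), v ∈ Wcar j →
      ∀ (i : Fin r) (a : Fin (M i)), (j : ℕ) < (i : ℕ) → v (blockIdx M i a) = 0 := by
    rintro j v ⟨A, hA, rfl⟩ i a hji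
    exact hJT A hA i j a _ hji
  set Wmod : Fin s → Submodule Dᵐᵒᵖ (Fin (∑ t, M t) → D) := fun j =>
    { carrier := Wcar j
      add_mem' := by
        rintro v w ⟨A, hA, rfl⟩ ⟨B, hB, rfl⟩
        exact ⟨A + B, J.add_mem hA hB, by funext p; simp [Matrix.add_apply]⟩
      zero_mem' := ⟨0, J.zero_mem, by funext p; simp⟩
      smul_mem' := by
        rintro x v ⟨A, hA, rfl⟩
        refine ⟨A * Matrix.single (blockIdx N j ⟨0, hN j⟩)
          (blockIdx N j ⟨0, hN j⟩) (unop x),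
          hJ _ _ (isNest_stdBasisMatrix N j j _ _ _ le_rfl) hA, ?_⟩
        funext p
        rw [Pi.smul_apply, MulOpposite.smul_eq_mul_unop,
          mul_stdBasisMatrix_apply, if_pos rfl] } with hWmod
  have hWmem : ∀ (j : Fin s) (v : Fin (∑ t, M t) → D), v ∈ Wmod j ↔ v ∈ Wcar j := by
    intro j v; rfl
  -- choice of the echelon matrices
  have hex := fun j => exists_rowEchelon (Wmod j)
  choose Rf hRe hRspan using hex
  set C : Fin s → Matrix (Fin (∑ t, M t)) (Fin (∑ t, M t)) D := fun j => (Rf j)ᵀ with hC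
  have hRCS : ∀ j, RCS (C j) = Wmod j := by
    intro j
    show Submodule.span Dᵐᵒᵖ (Set.range (Rf j)ᵀᵀ) = Wmod j
    rw [Matrix.transpose_transpose]
    exact hRspan j
  have hsetC : ∀ (Cs : Fin s → Matrix (Fin (∑ t, M t)) (Fin (∑ t, M t)) D)
      (A : Matrix (Fin (∑ t, M t)) (Fin (∑ t, N t)) D),
      (∀ j, ∃ Y : Matrix (Fin (∑ t, M t)) (Fin (N j)) D, blockCol N A j = Cs j * Y) ↔
        ∀ (j : Fin s) (b : Fin (N j)), (fun p => A p (blockIdx N j b)) ∈ RCS (Cs j) := by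
    intro Cs A
    constructor
    · intro h j b
      exact (exists_factor_iff (Cs j) (blockCol N A j)).1 (h j) b
    · intro h j
      exact (exists_factor_iff (Cs j) (blockCol N A j)).2 (fun b => h j b)
  have hJdesc : (J : Set (Matrix (Fin (∑ t, M t)) (Fin (∑ t, N t)) D)) =
      {A | ∀ j : Fin s, ∃ Y : Matrix (Fin (∑ t, M t)) (Fin (N j)) D,
        blockCol N A j = C j * Y} := by
    ext A
    simp only [SetLike.mem_coe, Set.mem_setOf_eq]
    rw [hsetC C A]
    constructor
    · intro hA j b
      rw [hRCS j]
      exact colmem A hA j b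
    · intro hA
      have hcols : ∀ (j : Fin s) (b : Fin (N j)),
          (fun p => A p (blockIdx N j b)) ∈ Wcar j := by
        intro j b
        have := hA j b
        rw [hRCS j] at this
        exact this
      have hrepr : A = ∑ j : Fin s, ∑ b : Fin (N j),
          (fun p q => if q = blockIdx N j b then A p (blockIdx N j b) else 0) := by
        funext p q
        obtain ⟨j0, c0, rfl⟩ := blockIdx_surj N q
        simp only [Finset.sum_apply]
        rw [Finset.sum_eq_single j0]
        · rw [Finset.sum_eq_single c0]
          · rw [if_pos rfl]
          · intro b _ hb
            rw [if_neg]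
            intro hc
            obtain ⟨-, h2⟩ := blockIdx_inj N hc
            exact hb (Fin.ext h2.symm)
          · intro h; exact absurd (Finset.mem_univ c0) h
        · intro j _ hj
          refine Finset.sum_eq_zero fun b _ => ?_
          rw [if_neg]
          intro hc
          obtain ⟨h1, -⟩ := blockIdx_inj N hc
          exact hj h1.symm
        · intro h; exact absurd (Finset.mem_univ j0) h
      rw [hrepr]
      exact AddSubgroup.sum_mem J fun j _ => AddSubgroup.sum_mem J fun b _ =>
        single j b _ (hcols j b)
  refine ⟨C, ⟨?_, ?_, ?_, hJdesc⟩, ?_⟩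
  · intro j
    show IsRowReducedEchelon (Rf j)ᵀᵀ
    rw [Matrix.transpose_transpose]
    exact hRe j
  · intro j hj
    rw [hRCS j, hRCS ⟨(j : ℕ) + 1, hj⟩]
    intro v hv
    exact mono j ⟨(j : ℕ) + 1, hj⟩ (by simp [Fin.le_def]) hv
  · intro j i hji a q
    have hq : Rf j q ∈ Wmod j := by
      rw [← hRspan j]
      exact Submodule.subset_span ⟨q, rfl⟩
    exact vanish j (Rf j q) hq i a hji
  · rintro C' ⟨hE', hMono', hTri', hSet'⟩
    have key : ∀ (C₁ C₂ : Fin s → Matrix (Fin (∑ t, M t)) (Fin (∑ t, M t)) D),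
        ({A : Matrix (Fin (∑ t, M t)) (Fin (∑ t, N t)) D |
            ∀ j : Fin s, ∃ Y : Matrix (Fin (∑ t, M t)) (Fin (N j)) D,
              blockCol N A j = C₁ j * Y}
          = {A | ∀ j : Fin s, ∃ Y : Matrix (Fin (∑ t, M t)) (Fin (N j)) D,
              blockCol N A j = C₂ j * Y}) →
        ∀ j, RCS (C₁ j) ≤ RCS (C₂ j) := by
      intro C₁ C₂ hset j v hv
      set Av : Matrix (Fin (∑ t, M t)) (Fin (∑ t, N t)) D :=
        fun p q => if q = blockIdx N j ⟨0, hN j⟩ then v p else 0 with hAv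
      have hmem : Av ∈ {A : Matrix (Fin (∑ t, M t)) (Fin (∑ t, N t)) D |
          ∀ j : Fin s, ∃ Y : Matrix (Fin (∑ t, M t)) (Fin (N j)) D,
            blockCol N A j = C₁ j * Y} := by
        intro j'
        apply (exists_factor_iff (C₁ j') (blockCol N Av j')).2
        intro b
        by_cases hb : blockIdx N j' b = blockIdx N j ⟨0, hN j⟩
        · obtain ⟨hj', -⟩ := blockIdx_inj N hb
          subst hj'
          have heq : (fun p => blockCol N Av j' p b) = v := funext fun p => if_pos hb
          rw [heq]
          exact hv
        · have heq : (fun p => blockCol N Av j' p b) = 0 := funext fun p => if_neg hb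
          rw [heq]
          exact Submodule.zero_mem _
      rw [hset] at hmem
      have h2 := (exists_factor_iff (C₂ j) (blockCol N Av j)).1 (hmem j) ⟨0, hN j⟩
      have heq : (fun p => blockCol N Av j p ⟨0, hN j⟩) = v := funext fun p => if_pos rfl
      rwa [heq] at h2
    have hseteq : {A : Matrix (Fin (∑ t, M t)) (Fin (∑ t, N t)) D |
          ∀ j : Fin s, ∃ Y : Matrix (Fin (∑ t, M t)) (Fin (N j)) D,
            blockCol N A j = C' j * Y}
        = {A | ∀ j : Fin s, ∃ Y : Matrix (Fin (∑ t, M t)) (Fin (N j)) D,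
            blockCol N A j = C j * Y} := by
      rw [← hSet', hJdesc]
    funext j
    have heq : (C' j)ᵀ = (C j)ᵀ := by
      apply rowEchelon_unique (hE' j) ?_ ?_
      · show IsRowReducedEchelon (Rf j)ᵀᵀ
        rw [Matrix.transpose_transpose]
        exact hRe j
      · exact le_antisymm (key C' C hseteq j) (key C C' hseteq.symm j)
    calc C' j = ((C' j)ᵀ)ᵀ := (Matrix.transpose_transpose _).symm
      _ = ((C j)ᵀ)ᵀ := by rw [heq]
      _ = C j := Matrix.transpose_transpose _

end AuxEchelon

/-- Every right submodule `J` of the nest module `T_{(M,N)}(D)` is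
described by a unique sequence `(C_1, …, C_s)` of right column reduced echelon matrices
in `M_m(D)` with increasing column spaces, whose `i`-th block rows vanish for `i > j`,
via `J = {A : Col_j(A) ∈ C_j·M_{m×n_j}(D) for all j}`. -/

theorem rightSubmodule_nest_exists_unique_echelon_seq
    (D : Type*) [DivisionRing D] (r s : ℕ) (M : Fin r → ℕ) (N : Fin s → ℕ)
    (hM : ∀ i, 0 < M i) (hN : ∀ j, 0 < N j)
    (J : AddSubgroup (Matrix (Fin (∑ t, M t)) (Fin (∑ t, N t)) D))
    (hJT : ∀ A ∈ J, IsNest M N A)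
    (hJ : ∀ (A : Matrix (Fin (∑ t, M t)) (Fin (∑ t, N t)) D)
      (Q : Matrix (Fin (∑ t, N t)) (Fin (∑ t, N t)) D),
      IsNest N N Q → A ∈ J → A * Q ∈ J) :
    ∃! C : Fin s → Matrix (Fin (∑ t, M t)) (Fin (∑ t, M t)) D,
      (∀ j, IsColReducedEchelon (C j)) ∧
      (∀ (j : Fin s) (hj : (j : ℕ) + 1 < s), RCS (C j) ≤ RCS (C ⟨(j : ℕ) + 1, hj⟩)) ∧
      (∀ (j : Fin s) (i : Fin r), (j : ℕ) < (i : ℕ) →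
        ∀ (a : Fin (M i)) (q : Fin (∑ t, M t)), C j (blockIdx M i a) q = 0) ∧
      (J : Set (Matrix (Fin (∑ t, M t)) (Fin (∑ t, N t)) D)) =
        {A | ∀ j : Fin s, ∃ Y : Matrix (Fin (∑ t, M t)) (Fin (N j)) D,
          blockCol N A j = C j * Y} := by
  exact main_thm D r s M N hM hN J hJT hJ
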